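/- The map Φ_W is positive if and only if for every x = (x₁, x₂, x₃) with x_i ≥ 0 and x₁ + x₂ + x₃ = 1 and every nonempty subset I ⊆ {1,2,3}, one has M_I(x) := Π_{i∈I} z_i − Σ_{i∈I} x_i · Π_{j∈I∖{i}} z_j ≥ 0, where z_i = Σ_{j=1}^3 w_{ij} x_j and the empty product equals 1. -/

import Mathlib

open Matrix BigOperators
open scoped ComplexOrder

/-- The generalized Choi map `Φ_W(X) = D_W(X) - X`. -/
noncomputable def PhiW (W : Matrix (Fin 3) (Fin 3) ℝ) (X : Matrix (Fin 3) (Fin 3) ℂ) :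
    Matrix (Fin 3) (Fin 3) ℂ :=
  Matrix.diagonal (fun i => ∑ j, (W i j : ℂ) * X j j) - X

/-- `Φ_W` is a positive map. -/
def PhiWPos (W : Matrix (Fin 3) (Fin 3) ℝ) : Prop :=
  ∀ X : Matrix (Fin 3) (Fin 3) ℂ, X.PosSemidef → (PhiW W X).PosSemidef

private lemma psd_det_nonneg {m : Type*} [Fintype m] [DecidableEq m]
    {A : Matrix m m ℂ} (hA : A.PosSemidef) : 0 ≤ A.det := by
  rw [hA.isHermitian.det_eq_prod_eigenvalues]
  exact Finset.prod_nonneg fun i _ => RCLike.ofReal_nonneg.2 (hA.eigenvalues_nonneg i)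

private lemma fin3_finset_cases (I : Finset (Fin 3)) (hI : I.Nonempty) :
    I = {0} ∨ I = {1} ∨ I = {2} ∨ I = {0,1} ∨ I = {0,2} ∨ I = {1,2} ∨ I = {0,1,2} := by
  revert hI; revert I; decide

private lemma quadineq (W : Matrix (Fin 3) (Fin 3) ℝ) (hW : ∀ i j, 0 ≤ W i j)
    (hcond : ∀ x : Fin 3 → ℝ, (∀ i, 0 ≤ x i) → (∑ i, x i) = 1 →
        ∀ I : Finset (Fin 3), I.Nonempty →
          0 ≤ (∏ i ∈ I, ∑ j, W i j * x j) -
                ∑ i ∈ I, x i * ∏ j ∈ I.erase i, (∑ k, W j k * x k))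
    (w u : Fin 3 → ℂ) :
    Complex.normSq (∑ j, w j * u j) ≤
      ∑ i, (∑ j, W i j * Complex.normSq (w j)) * Complex.normSq (u i) := by
  set x : Fin 3 → ℝ := fun i => Complex.normSq (w i) with hxdef
  set z : Fin 3 → ℝ := fun i => ∑ j, W i j * x j with hzdef
  suffices hgoal : Complex.normSq (∑ j, w j * u j) ≤ ∑ i, z i * Complex.normSq (u i) by
    simpa only [hzdef, hxdef] using hgoal
  have hx : ∀ i, 0 ≤ x i := fun i => Complex.normSq_nonneg _
  have hz0 : ∀ i, 0 ≤ z i := fun i =>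
    Finset.sum_nonneg fun j _ => mul_nonneg (hW i j) (hx j)
  have hRHS : 0 ≤ ∑ i, z i * Complex.normSq (u i) :=
    Finset.sum_nonneg fun i _ => mul_nonneg (hz0 i) (Complex.normSq_nonneg _)
  by_cases hs : (∑ i, x i) = 0
  · -- all w i = 0
    have hx0 : ∀ i, x i = 0 := by
      intro i
      have := (Finset.sum_eq_zero_iff_of_nonneg (fun i _ => hx i)).1 hs i (Finset.mem_univ i)
      exact this
    have hw0 : ∀ i, w i = 0 := fun i => Complex.normSq_eq_zero.1 (hx0 i)
    simp only [hw0, zero_mul, Finset.sum_const_zero, Complex.normSq_zero]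
    exact hRHS
  · have hspos : 0 < ∑ i, x i :=
      lt_of_le_of_ne (Finset.sum_nonneg fun i _ => hx i) (Ne.symm hs)
    set s : ℝ := ∑ i, x i with hsdef
    set x' : Fin 3 → ℝ := fun i => x i / s with hx'def
    have hx' : ∀ i, 0 ≤ x' i := fun i => div_nonneg (hx i) hspos.le
    have hsum' : (∑ i, x' i) = 1 := by
      rw [hx'def, ← Finset.sum_div, ← hsdef, div_self (ne_of_gt hspos)]
    have hz' : ∀ i, (∑ j, W i j * x' j) = z i / s := by
      intro i
      rw [hzdef, Finset.sum_div]
      exact Finset.sum_congr rfl fun j _ => by rw [hx'def, mul_div_assoc]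
    set S : Finset (Fin 3) := Finset.univ.filter (fun i => 0 < x i) with hSdef
    have hmemS : ∀ i, i ∈ S ↔ 0 < x i := by
      intro i; simp [hSdef]
    -- z positive on S
    have hzS : ∀ i ∈ S, 0 < z i := by
      intro i hi
      have h1 := hcond x' hx' hsum' {i} (Finset.singleton_nonempty i)
      rw [Finset.prod_singleton, Finset.sum_singleton, Finset.erase_singleton,
        Finset.prod_empty, mul_one, hz' i] at h1
      have : x' i ≤ z i / s := by linarith
      have hxi : 0 < x i := (hmemS i).1 hi
      have : x i / s ≤ z i / s := this
      have : x i ≤ z i := by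
        exact (div_le_div_iff_of_pos_right hspos).1 this
      linarith
    -- the fraction sum bound
    have hfrac : ∑ i ∈ S, x i / z i ≤ 1 := by
      have hSne : S.Nonempty := by
        obtain ⟨i, _, hi⟩ := Finset.exists_lt_of_sum_lt (by simpa using hspos :
          (∑ i : Fin 3, (0:ℝ)) < ∑ i, x i)
        exact ⟨i, (hmemS i).2 hi⟩
      have H := hcond x' hx' hsum' S hSne
      have hz'S : ∀ i ∈ S, 0 < (∑ j, W i j * x' j) := by
        intro i hi; rw [hz' i]; exact div_pos (hzS i hi) hspos
      set P : ℝ := ∏ i ∈ S, (∑ j, W i j * x' j) with hPdef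
      have hP : 0 < P := Finset.prod_pos hz'S
      have herase : ∀ i ∈ S, (∏ j ∈ S.erase i, (∑ k, W j k * x' k)) =
          P / (∑ j, W i j * x' j) := by
        intro i hi
        rw [eq_div_iff (ne_of_gt (hz'S i hi)), hPdef, Finset.prod_erase_mul S _ hi]
      have H2 : ∑ i ∈ S, x' i * (P / (∑ j, W i j * x' j)) ≤ P := by
        calc ∑ i ∈ S, x' i * (P / (∑ j, W i j * x' j))
            = ∑ i ∈ S, x' i * ∏ j ∈ S.erase i, (∑ k, W j k * x' k) :=
              Finset.sum_congr rfl fun i hi => by rw [herase i hi]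
          _ ≤ P := by linarith
      have H3 : P * (∑ i ∈ S, x' i / (∑ j, W i j * x' j)) ≤ P * 1 := by
        rw [mul_one, Finset.mul_sum]
        calc ∑ i ∈ S, P * (x' i / (∑ j, W i j * x' j))
            = ∑ i ∈ S, x' i * (P / (∑ j, W i j * x' j)) := by
              exact Finset.sum_congr rfl fun i hi => by ring
          _ ≤ P := H2
      have H4 : (∑ i ∈ S, x' i / (∑ j, W i j * x' j)) ≤ 1 :=
        le_of_mul_le_mul_left H3 hP
      calc ∑ i ∈ S, x i / z i
          = ∑ i ∈ S, x' i / (∑ j, W i j * x' j) := by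
            refine Finset.sum_congr rfl fun i hi => ?_
            rw [hz' i]
            simp only [hx'def]
            field_simp
        _ ≤ 1 := H4
    -- Cauchy-Schwarz
    have hwS : ∀ j, j ∉ S → w j = 0 := by
      intro j hj
      have h1 : ¬ 0 < x j := by simpa [hmemS] using hj
      have h2 : x j = 0 := le_antisymm (not_lt.1 h1) (hx j)
      exact Complex.normSq_eq_zero.1 h2
    have hc : (∑ j, w j * u j) = ∑ j ∈ S, w j * u j := by
      symm
      apply Finset.sum_subset (Finset.subset_univ S)
      intro j _ hj
      rw [hwS j hj, zero_mul]
    have habs : ‖∑ j, w j * u j‖ ≤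
        ∑ j ∈ S, ‖w j‖ * ‖u j‖ := by
      rw [hc]
      calc ‖∑ j ∈ S, w j * u j‖ ≤ ∑ j ∈ S, ‖w j * u j‖ := by
            simpa using norm_sum_le S (fun j => w j * u j)
        _ = ∑ j ∈ S, ‖w j‖ * ‖u j‖ :=
            Finset.sum_congr rfl fun j _ => norm_mul _ _
    have hCS : (∑ j ∈ S, ‖w j‖ * ‖u j‖)^2 ≤
        (∑ j ∈ S, x j / z j) * (∑ j ∈ S, z j * Complex.normSq (u j)) := by
      have hcs := Finset.sum_mul_sq_le_sq_mul_sq S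
        (fun j => ‖w j‖ / Real.sqrt (z j))
        (fun j => Real.sqrt (z j) * ‖u j‖)
      calc (∑ j ∈ S, ‖w j‖ * ‖u j‖)^2
          = (∑ j ∈ S, (‖w j‖ / Real.sqrt (z j)) *
              (Real.sqrt (z j) * ‖u j‖))^2 := by
            congr 1
            refine Finset.sum_congr rfl fun j hj => ?_
            have hzj : Real.sqrt (z j) ≠ 0 := ne_of_gt (Real.sqrt_pos.2 (hzS j hj))
            field_simp
        _ ≤ (∑ j ∈ S, (‖w j‖ / Real.sqrt (z j))^2) *
              (∑ j ∈ S, (Real.sqrt (z j) * ‖u j‖)^2) := hcs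
        _ = (∑ j ∈ S, x j / z j) * (∑ j ∈ S, z j * Complex.normSq (u j)) := by
            congr 1
            · refine Finset.sum_congr rfl fun j hj => ?_
              rw [div_pow, Complex.sq_norm, Real.sq_sqrt (hz0 j)]
            · refine Finset.sum_congr rfl fun j hj => ?_
              rw [mul_pow, Complex.sq_norm, Real.sq_sqrt (hz0 j)]
    calc Complex.normSq (∑ j, w j * u j)
        = (‖∑ j, w j * u j‖)^2 := (Complex.sq_norm _).symm
      _ ≤ (∑ j ∈ S, ‖w j‖ * ‖u j‖)^2 :=
          pow_le_pow_left₀ (norm_nonneg _) habs 2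
      _ ≤ (∑ j ∈ S, x j / z j) * (∑ j ∈ S, z j * Complex.normSq (u j)) := hCS
      _ ≤ 1 * (∑ j ∈ S, z j * Complex.normSq (u j)) :=
          mul_le_mul_of_nonneg_right hfrac
            (Finset.sum_nonneg fun j _ => mul_nonneg (hz0 j) (Complex.normSq_nonneg _))
      _ = ∑ j ∈ S, z j * Complex.normSq (u j) := one_mul _
      _ ≤ ∑ i, z i * Complex.normSq (u i) :=
          Finset.sum_le_sum_of_subset_of_nonneg (Finset.subset_univ S)
            (fun j _ _ => mul_nonneg (hz0 j) (Complex.normSq_nonneg _))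

private lemma phiW_sum {ι : Type*} (W : Matrix (Fin 3) (Fin 3) ℝ) (s : Finset ι)
    (f : ι → Matrix (Fin 3) (Fin 3) ℂ) :
    PhiW W (∑ k ∈ s, f k) = ∑ k ∈ s, PhiW W (f k) := by
  ext i j
  simp only [PhiW, Matrix.sub_apply, Matrix.sum_apply, Matrix.diagonal_apply]
  rw [Finset.sum_sub_distrib]
  congr 1
  split_ifs with hij
  · rw [Finset.sum_comm]
    congr 1; ext j'
    rw [Finset.mul_sum]
  · simp

private lemma rankone (W : Matrix (Fin 3) (Fin 3) ℝ) (hW : ∀ i j, 0 ≤ W i j)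
    (hq : ∀ w u : Fin 3 → ℂ, Complex.normSq (∑ j, w j * u j) ≤
      ∑ i, (∑ j, W i j * Complex.normSq (w j)) * Complex.normSq (u i))
    (w : Fin 3 → ℂ) :
    (PhiW W (Matrix.of fun i j => (starRingEnd ℂ) (w i) * w j)).PosSemidef := by
  refine Matrix.PosSemidef.of_dotProduct_mulVec_nonneg ?_ ?_
  · -- Hermitian
    ext i j
    simp only [Matrix.conjTranspose_apply, PhiW, Matrix.sub_apply, Matrix.diagonal_apply,
      Matrix.of_apply, Complex.star_def, map_sub, apply_ite (starRingEnd ℂ), map_sum,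
      _root_.map_mul, Complex.conj_conj, Complex.conj_ofReal, map_zero, Fin.sum_univ_three]
    by_cases hij : i = j
    · subst hij; simp only [if_pos rfl, if_true, map_add, _root_.map_mul, Complex.conj_conj, Complex.conj_ofReal]; ring
    · simp only [if_neg hij, if_neg (Ne.symm hij)]; ring
  · intro uu
    have e1 : star uu ⬝ᵥ ((PhiW W (Matrix.of fun i j => (starRingEnd ℂ) (w i) * w j)) *ᵥ uu)
        = ((∑ i, (∑ j, W i j * Complex.normSq (w j)) * Complex.normSq (uu i)
            - Complex.normSq (∑ j, w j * uu j) : ℝ) : ℂ) := by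
      push_cast
      simp only [← Complex.mul_conj]
      simp only [PhiW, dotProduct, Matrix.mulVec, Matrix.sub_apply, Matrix.diagonal_apply,
        Matrix.of_apply, Pi.star_apply, Complex.star_def, Fin.sum_univ_three,
        show ((0:Fin 3) = 1) ↔ False from by decide, show ((0:Fin 3) = 2) ↔ False from by decide,
        show ((1:Fin 3) = 0) ↔ False from by decide, show ((1:Fin 3) = 2) ↔ False from by decide,
        show ((2:Fin 3) = 0) ↔ False from by decide, show ((2:Fin 3) = 1) ↔ False from by decide,
        show ((0:Fin 3) = 0) ↔ True from by decide, show ((1:Fin 3) = 1) ↔ True from by decide,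
        show ((2:Fin 3) = 2) ↔ True from by decide, if_true, if_false,
        map_sum, _root_.map_mul, map_add, Complex.conj_conj, Complex.conj_ofReal]
      ring
    rw [e1, Complex.zero_le_real]
    have := hq w uu
    linarith

private lemma forward_dir (W : Matrix (Fin 3) (Fin 3) ℝ) (x : Fin 3 → ℝ) (hx : ∀ i, 0 ≤ x i)
    (h : ∀ X : Matrix (Fin 3) (Fin 3) ℂ, X.PosSemidef → (PhiW W X).PosSemidef) :
    ∀ I : Finset (Fin 3), I.Nonempty →
      0 ≤ (∏ i ∈ I, ∑ j, W i j * x j) -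
            ∑ i ∈ I, x i * ∏ j ∈ I.erase i, (∑ k, W j k * x k) := by
  set v : Fin 3 → ℝ := fun i => Real.sqrt (x i) with hv
  have hxv : ∀ i, v i * v i = x i := fun i => Real.mul_self_sqrt (hx i)
  set Mr : Matrix (Fin 3) (Fin 3) ℝ :=
    Matrix.of (fun i j => (if i = j then ∑ k, W i k * x k else 0) - v i * v j) with hMr
  set B : Matrix (Fin 3) (Fin 3) ℂ := Matrix.of (fun i j => if i = 0 then (v j : ℂ) else 0) with hB
  have hPhi : PhiW W (Bᴴ * B) = Mr.map Complex.ofReal := by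
    ext i j
    simp only [PhiW, Matrix.sub_apply, Matrix.diagonal_apply, Matrix.mul_apply,
      Matrix.conjTranspose_apply, Matrix.map_apply, Matrix.of_apply, hB, hMr,
      Fin.sum_univ_three, Complex.star_def, Complex.conj_ofReal,
      show ((0:Fin 3) = 0) ↔ True from by decide,
      show ((1:Fin 3) = 0) ↔ False from by decide,
      show ((2:Fin 3) = 0) ↔ False from by decide, if_true, if_false]
    by_cases hij : i = j
    · simp only [if_pos hij]
      push_cast [← hxv, Complex.conj_ofReal]; ring
    · simp only [if_neg hij]
      push_cast [← hxv, Complex.conj_ofReal]; ring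
  have hPSD := h _ (Matrix.posSemidef_conjTranspose_mul_self B)
  rw [hPhi] at hPSD
  have key : ∀ {m : ℕ} (e : Fin m → Fin 3), 0 ≤ (Mr.submatrix e e).det := by
    intro m e
    have h2 := psd_det_nonneg (hPSD.submatrix e)
    rw [Matrix.submatrix_map,
      show ((Mr.submatrix e e).map Complex.ofReal) =
        Complex.ofRealHom.mapMatrix (Mr.submatrix e e) from rfl,
      ← RingHom.map_det] at h2
    exact Complex.zero_le_real.1 h2
  intro I hI
  rcases fin3_finset_cases I hI with rfl|rfl|rfl|rfl|rfl|rfl|rfl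
  · have h4 := key ![0]
    rw [Matrix.det_fin_one] at h4
    simp only [Matrix.submatrix_apply, Matrix.of_apply, Matrix.cons_val_zero, hMr] at h4
    simp only [show ((0:Fin 3) = 1) ↔ False from by decide,
      show ((0:Fin 3) = 2) ↔ False from by decide, show ((1:Fin 3) = 0) ↔ False from by decide,
      show ((1:Fin 3) = 2) ↔ False from by decide, show ((2:Fin 3) = 0) ↔ False from by decide,
      show ((2:Fin 3) = 1) ↔ False from by decide, if_true, if_false, if_pos rfl,
      zero_sub, neg_mul, mul_neg, neg_neg, zero_mul, mul_zero, sub_zero] at h4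
    simp [Finset.erase_singleton]
    rw [← hxv 0]; linarith
  · have h4 := key ![1]
    rw [Matrix.det_fin_one] at h4
    simp only [Matrix.submatrix_apply, Matrix.of_apply, Matrix.cons_val_zero, hMr] at h4
    simp only [show ((0:Fin 3) = 1) ↔ False from by decide,
      show ((0:Fin 3) = 2) ↔ False from by decide, show ((1:Fin 3) = 0) ↔ False from by decide,
      show ((1:Fin 3) = 2) ↔ False from by decide, show ((2:Fin 3) = 0) ↔ False from by decide,
      show ((2:Fin 3) = 1) ↔ False from by decide, if_true, if_false, if_pos rfl,
      zero_sub, neg_mul, mul_neg, neg_neg, zero_mul, mul_zero, sub_zero] at h4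
    simp [Finset.erase_singleton]
    rw [← hxv 1]; linarith
  · have h4 := key ![2]
    rw [Matrix.det_fin_one] at h4
    simp only [Matrix.submatrix_apply, Matrix.of_apply, Matrix.cons_val_zero, hMr] at h4
    simp only [show ((0:Fin 3) = 1) ↔ False from by decide,
      show ((0:Fin 3) = 2) ↔ False from by decide, show ((1:Fin 3) = 0) ↔ False from by decide,
      show ((1:Fin 3) = 2) ↔ False from by decide, show ((2:Fin 3) = 0) ↔ False from by decide,
      show ((2:Fin 3) = 1) ↔ False from by decide, if_true, if_false, if_pos rfl,
      zero_sub, neg_mul, mul_neg, neg_neg, zero_mul, mul_zero, sub_zero] at h4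
    simp [Finset.erase_singleton]
    rw [← hxv 2]; linarith
  · have h4 := key ![0,1]
    rw [Matrix.det_fin_two] at h4
    simp only [Matrix.submatrix_apply, Matrix.of_apply, hMr, Matrix.cons_val_zero,
      Matrix.cons_val_one, Matrix.head_cons] at h4
    simp only [show ((0:Fin 3) = 1) ↔ False from by decide,
      show ((0:Fin 3) = 2) ↔ False from by decide, show ((1:Fin 3) = 0) ↔ False from by decide,
      show ((1:Fin 3) = 2) ↔ False from by decide, show ((2:Fin 3) = 0) ↔ False from by decide,
      show ((2:Fin 3) = 1) ↔ False from by decide, if_true, if_false, if_pos rfl,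
      zero_sub, neg_mul, mul_neg, neg_neg, zero_mul, mul_zero, sub_zero] at h4
    simp [show ({0,1} : Finset (Fin 3)).erase 0 = {1} from rfl,
      show ({0,1} : Finset (Fin 3)).erase 1 = {0} from rfl, Finset.sum_pair, Finset.prod_pair]
    rw [← hxv 0, ← hxv 1]; nlinarith [h4]
  · have h4 := key ![0,2]
    rw [Matrix.det_fin_two] at h4
    simp only [Matrix.submatrix_apply, Matrix.of_apply, hMr, Matrix.cons_val_zero,
      Matrix.cons_val_one, Matrix.head_cons] at h4
    simp only [show ((0:Fin 3) = 1) ↔ False from by decide,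
      show ((0:Fin 3) = 2) ↔ False from by decide, show ((1:Fin 3) = 0) ↔ False from by decide,
      show ((1:Fin 3) = 2) ↔ False from by decide, show ((2:Fin 3) = 0) ↔ False from by decide,
      show ((2:Fin 3) = 1) ↔ False from by decide, if_true, if_false, if_pos rfl,
      zero_sub, neg_mul, mul_neg, neg_neg, zero_mul, mul_zero, sub_zero] at h4
    simp [show ({0,2} : Finset (Fin 3)).erase 0 = {2} from rfl,
      show ({0,2} : Finset (Fin 3)).erase 2 = {0} from rfl, Finset.sum_pair, Finset.prod_pair]
    rw [← hxv 0, ← hxv 2]; nlinarith [h4]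
  · have h4 := key ![1,2]
    rw [Matrix.det_fin_two] at h4
    simp only [Matrix.submatrix_apply, Matrix.of_apply, hMr, Matrix.cons_val_zero,
      Matrix.cons_val_one, Matrix.head_cons] at h4
    simp only [show ((0:Fin 3) = 1) ↔ False from by decide,
      show ((0:Fin 3) = 2) ↔ False from by decide, show ((1:Fin 3) = 0) ↔ False from by decide,
      show ((1:Fin 3) = 2) ↔ False from by decide, show ((2:Fin 3) = 0) ↔ False from by decide,
      show ((2:Fin 3) = 1) ↔ False from by decide, if_true, if_false, if_pos rfl,
      zero_sub, neg_mul, mul_neg, neg_neg, zero_mul, mul_zero, sub_zero] at h4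
    simp [show ({1,2} : Finset (Fin 3)).erase 1 = {2} from rfl,
      show ({1,2} : Finset (Fin 3)).erase 2 = {1} from rfl, Finset.sum_pair, Finset.prod_pair]
    rw [← hxv 1, ← hxv 2]; nlinarith [h4]
  · have h4 := key ![0,1,2]
    rw [Matrix.det_fin_three] at h4
    simp only [Matrix.submatrix_apply, Matrix.of_apply, hMr, Matrix.cons_val_zero,
      Matrix.cons_val_one, Matrix.head_cons, Matrix.cons_val_two, Matrix.tail_cons] at h4
    simp only [show ((0:Fin 3) = 1) ↔ False from by decide,
      show ((0:Fin 3) = 2) ↔ False from by decide, show ((1:Fin 3) = 0) ↔ False from by decide,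
      show ((1:Fin 3) = 2) ↔ False from by decide, show ((2:Fin 3) = 0) ↔ False from by decide,
      show ((2:Fin 3) = 1) ↔ False from by decide, if_true, if_false, if_pos rfl,
      zero_sub, neg_mul, mul_neg, neg_neg, zero_mul, mul_zero, sub_zero] at h4
    simp [show ({0,1,2} : Finset (Fin 3)).erase 0 = {1,2} from rfl,
      show ({0,1,2} : Finset (Fin 3)).erase 1 = {0,2} from rfl,
      show ({0,1,2} : Finset (Fin 3)).erase 2 = {0,1} from rfl,
      Finset.sum_pair, Finset.prod_pair, Finset.prod_insert, Finset.sum_insert,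
      Finset.mem_insert, Finset.mem_singleton]
    rw [← hxv 0, ← hxv 1, ← hxv 2]; nlinarith [h4]

/-- `Φ_W` is positive iff all quantities `M_I(x)` are nonnegative for `x` in the
2-simplex and `I` a nonempty subset of `{1,2,3}`. -/
theorem phiW_positive_iff_minors (W : Matrix (Fin 3) (Fin 3) ℝ) (hW : ∀ i j, 0 ≤ W i j) :
    PhiWPos W ↔
      ∀ x : Fin 3 → ℝ, (∀ i, 0 ≤ x i) → (∑ i, x i) = 1 →
        ∀ I : Finset (Fin 3), I.Nonempty →
          0 ≤ (∏ i ∈ I, ∑ j, W i j * x j) -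
                ∑ i ∈ I, x i * ∏ j ∈ I.erase i, (∑ k, W j k * x k) := by
  constructor
  · intro h x hx _ I hI
    exact forward_dir W x hx h I hI
  · intro hcond X hXpsd
    obtain ⟨B, rfl⟩ : ∃ B : Matrix (Fin 3) (Fin 3) ℂ, X = Bᴴ * B := by
      open scoped MatrixOrder Matrix.Norms.L2Operator in
      exact CStarAlgebra.nonneg_iff_eq_star_mul_self.mp hXpsd.nonneg
    have hdecomp : Bᴴ * B =
        ∑ k : Fin 3, Matrix.of (fun i j => (starRingEnd ℂ) (B k i) * B k j) := by
      ext i j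
      simp [Matrix.mul_apply, Matrix.sum_apply, Matrix.conjTranspose_apply, Complex.star_def]
    rw [hdecomp, phiW_sum]
    exact Finset.sum_induction _ _ (fun a b ha hb => ha.add hb) Matrix.PosSemidef.zero
      (fun k _ => rankone W hW (fun ww uu => quadineq W hW hcond ww uu) (fun i => B k i))
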